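/- Let α ∈ (0,1), let g : ℝ^d → ℝ^d satisfy a global Lipschitz condition with constant L > 0, let T > 0, let f : [0,T] → ℝ^d be continuous, and let γ > 0. Define the operator 𝔗 on C([0,T], ℝ^d) by (𝔗x)(t) = f(t) + (1/Γ(α)) ∫₀ᵗ (t−s)^{α−1} g(x(s)) ds. Then for all x, y ∈ C([0,T], ℝ^d), ‖𝔗x − 𝔗y‖_γ ≤ (L/γ) ‖x − y‖_γ, where ‖·‖_γ is the Bielecki-type weighted norm. In particular, if γ > L then 𝔗 is a contraction on (C([0,T], ℝ^d), ‖·‖_γ). -/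

import Mathlib

open Real MeasureTheory Set

/-- The Mittag-Leffler function `E_α(t) = ∑_{k=0}^∞ t^k / Γ(αk+1)`. -/
noncomputable def mittagLeffler (α t : ℝ) : ℝ :=
  ∑' k : ℕ, t ^ k / Real.Gamma (α * k + 1)

/-- The Bielecki-type weighted norm `‖x‖_γ = sup_{t∈[0,T]} ‖x(t)‖ / E_α(γ t^α)`. -/
noncomputable def bieleckiNorm {d : ℕ} (α γ T : ℝ)
    (x : ℝ → EuclideanSpace ℝ (Fin d)) : ℝ :=
  ⨆ t : Set.Icc (0:ℝ) T, ‖x t.1‖ / mittagLeffler α (γ * t.1 ^ α)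

/-- The operator `(𝔗x)(t) = f(t) + (1/Γ(α)) ∫₀ᵗ (t−s)^{α−1} g(x(s)) ds`. -/
noncomputable def volterraOp {d : ℕ} (α : ℝ)
    (g : EuclideanSpace ℝ (Fin d) → EuclideanSpace ℝ (Fin d))
    (f : ℝ → EuclideanSpace ℝ (Fin d))
    (x : ℝ → EuclideanSpace ℝ (Fin d)) : ℝ → EuclideanSpace ℝ (Fin d) :=
  fun t => f t + (1 / Real.Gamma α) •
    ∫ s in (0:ℝ)..t, ((t - s) ^ (α - 1)) • g (x s)

open Filter

lemma realBeta {a b : ℝ} (ha : 0 < a) (hb : 0 < b) :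
    ∫ u in (0:ℝ)..1, u ^ (a - 1) * (1 - u) ^ (b - 1) =
      Real.Gamma a * Real.Gamma b / Real.Gamma (a + b) := by
  have hab : Real.Gamma (a + b) ≠ 0 := (Real.Gamma_pos_of_pos (by linarith)).ne'
  have key := Complex.Gamma_mul_Gamma_eq_betaIntegral
    (s := (a : ℂ)) (t := (b : ℂ)) (by simpa using ha) (by simpa using hb)
  have hbeta : Complex.betaIntegral (a : ℂ) (b : ℂ) =
      ((∫ u in (0:ℝ)..1, u ^ (a - 1) * (1 - u) ^ (b - 1) : ℝ) : ℂ) := by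
    rw [Complex.betaIntegral, ← intervalIntegral.integral_ofReal]
    refine intervalIntegral.integral_congr fun x hx => ?_
    rw [uIcc_of_le zero_le_one] at hx
    rw [Complex.ofReal_mul, Complex.ofReal_cpow hx.1, Complex.ofReal_cpow (by linarith [hx.2] : (0:ℝ) ≤ 1 - x)]
    push_cast; ring
  rw [hbeta] at key
  have : ((Real.Gamma a * Real.Gamma b : ℝ) : ℂ) =
      ((Real.Gamma (a + b) * ∫ u in (0:ℝ)..1, u ^ (a - 1) * (1 - u) ^ (b - 1) : ℝ) : ℂ) := by
    push_cast
    rw [← Complex.Gamma_ofReal, ← Complex.Gamma_ofReal, ← Complex.Gamma_ofReal]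
    push_cast
    exact key
  have h2 := Complex.ofReal_inj.1 this
  field_simp
  linarith [h2]

-- Gamma slope inequality: for x > 0, 0 < α : Γ(x+1) * x^α ≤ Γ(x+1+α)
lemma gamma_slope {α x : ℝ} (hα : 0 < α) (hx : 0 < x) :
    Real.Gamma (x + 1) * x ^ α ≤ Real.Gamma (x + 1 + α) := by
  have h := Real.convexOn_log_Gamma.slope_mono_adjacent
    (x := x) (y := x + 1) (z := x + 1 + α)
    (mem_Ioi.2 hx) (mem_Ioi.2 (by linarith)) (by linarith) (by linarith)
  simp only [Function.comp] at h
  have hgx : 0 < Real.Gamma x := Real.Gamma_pos_of_pos hx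
  have hgx1 : 0 < Real.Gamma (x + 1) := Real.Gamma_pos_of_pos (by linarith)
  have hgz : 0 < Real.Gamma (x + 1 + α) := Real.Gamma_pos_of_pos (by linarith)
  have hG : Real.Gamma (x + 1) = x * Real.Gamma x := Real.Gamma_add_one hx.ne'
  have h1 : Real.log (Real.Gamma (x+1)) - Real.log (Real.Gamma x) = Real.log x := by
    rw [hG, Real.log_mul hx.ne' hgx.ne']; ring
  have h2 : (Real.log (Real.Gamma (x+1)) - Real.log (Real.Gamma x)) / (x + 1 - x)
      ≤ (Real.log (Real.Gamma (x+1+α)) - Real.log (Real.Gamma (x+1))) / (x + 1 + α - (x+1)) := h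
  rw [h1] at h2
  simp only [add_sub_cancel_left] at h2
  have h3 : α * Real.log x + Real.log (Real.Gamma (x+1)) ≤ Real.log (Real.Gamma (x+1+α)) := by
    have := (div_le_div_iff₀ (by norm_num : (0:ℝ) < 1) hα).1 (by simpa using h2)
    nlinarith
  calc Real.Gamma (x+1) * x ^ α = Real.exp (α * Real.log x + Real.log (Real.Gamma (x+1))) := by
        rw [Real.exp_add, Real.exp_log hgx1, Real.rpow_def_of_pos hx, mul_comm α (Real.log x)]; ring
    _ ≤ Real.exp (Real.log (Real.Gamma (x+1+α))) := Real.exp_le_exp.2 h3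
    _ = Real.Gamma (x+1+α) := Real.exp_log hgz

lemma ML_summable {α : ℝ} (hα : 0 < α) {u : ℝ} (hu : 0 ≤ u) :
    Summable (fun k : ℕ => u ^ k / Real.Gamma (α * k + 1)) := by
  refine summable_of_ratio_norm_eventually_le (r := 1/2) (by norm_num) ?_
  have htend : Tendsto (fun k : ℕ => α * k) atTop atTop :=
    Tendsto.const_mul_atTop hα tendsto_natCast_atTop_atTop
  have hev : ∀ᶠ k : ℕ in atTop, (2 * u + 1) ^ (α⁻¹) ≤ α * k := htend.eventually_ge_atTop _
  filter_upwards [hev, eventually_ge_atTop 1] with k hk hk1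
  have hx : (0:ℝ) < α * k := lt_of_lt_of_le (Real.rpow_pos_of_pos (by linarith) _) hk
  have hpow : 2 * u + 1 ≤ (α * k) ^ α := by
    calc 2 * u + 1 = ((2*u+1) ^ (α⁻¹)) ^ α := by
          rw [Real.rpow_inv_rpow (by linarith) hα.ne']
      _ ≤ (α * k) ^ α := Real.rpow_le_rpow (Real.rpow_nonneg (by linarith) _) hk hα.le
  have hslope := gamma_slope hα hx
  have hg1 : 0 < Real.Gamma (α * k + 1) := Real.Gamma_pos_of_pos (by linarith)
  have hg2 : 0 < Real.Gamma (α * (k+1) + 1) := Real.Gamma_pos_of_pos (by positivity)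
  have heq : α * (↑(k+1) : ℕ) + 1 = α * k + 1 + α := by push_cast; ring
  rw [Real.norm_of_nonneg (by positivity), Real.norm_of_nonneg (by positivity)]
  have key : (2 * u + 1) * Real.Gamma (α * k + 1) ≤ Real.Gamma (α * (↑(k+1):ℕ) + 1) := by
    rw [heq]
    calc (2 * u + 1) * Real.Gamma (α * k + 1) ≤ (α * k) ^ α * Real.Gamma (α * k + 1) :=
          mul_le_mul_of_nonneg_right hpow hg1.le
      _ ≤ Real.Gamma (α * k + 1 + α) := by rw [mul_comm]; exact hslope
  have hb : (0:ℝ) < (2 * u + 1) * Real.Gamma (α * k + 1) := by positivity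
  calc u ^ (k+1) / Real.Gamma (α * (↑(k+1):ℕ) + 1)
      ≤ u ^ (k+1) / ((2 * u + 1) * Real.Gamma (α * k + 1)) :=
        div_le_div_of_nonneg_left (by positivity) hb key
    _ = (u / (2 * u + 1)) * (u ^ k / Real.Gamma (α * k + 1)) := by
        rw [pow_succ]; field_simp
    _ ≤ (1/2) * (u ^ k / Real.Gamma (α * k + 1)) := by
        refine mul_le_mul_of_nonneg_right ?_ (by positivity)
        rw [div_le_div_iff₀ (by linarith) (by norm_num)]; linarith

-- ∫_0^t (t-s)^(α-1) s^c ds = Γ(c+1)Γ(α)/Γ(c+1+α) * t^(c+α)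
lemma Ik {α : ℝ} (hα : 0 < α) {t : ℝ} (ht : 0 < t) {c : ℝ} (hc : 0 ≤ c) :
    ∫ s in (0:ℝ)..t, (t - s) ^ (α - 1) * s ^ c =
      Real.Gamma (c + 1) * Real.Gamma α / Real.Gamma (c + 1 + α) * t ^ (c + α) := by
  have hsub := intervalIntegral.smul_integral_comp_mul_left
    (f := fun s => (t - s) ^ (α - 1) * s ^ c) (a := 0) (b := 1) t
  rw [mul_zero, mul_one] at hsub
  rw [← hsub]
  have hcong : ∫ u in (0:ℝ)..1, (t - t * u) ^ (α - 1) * (t * u) ^ c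
      = ∫ u in (0:ℝ)..1, (t ^ (α-1) * t ^ c) * (u ^ ((c+1)-1) * (1 - u) ^ (α - 1)) := by
    refine intervalIntegral.integral_congr fun u hu => ?_
    rw [uIcc_of_le zero_le_one] at hu
    have h1u : 0 ≤ 1 - u := by linarith [hu.2]
    rw [show t - t * u = t * (1 - u) by ring, Real.mul_rpow ht.le h1u,
      Real.mul_rpow ht.le hu.1, show (c+1)-1 = c by ring]
    ring
  rw [hcong, intervalIntegral.integral_const_mul, realBeta (by linarith) hα]
  have hts : t ^ (c + α) = t * (t ^ (α - 1) * t ^ c) := by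
    rw [show c + α = 1 + ((α - 1) + c) by ring, Real.rpow_add ht, Real.rpow_add ht,
      Real.rpow_one]
  rw [smul_eq_mul, hts]
  ring

lemma ML_term_nonneg {α : ℝ} (hα : 0 < α) {u : ℝ} (hu : 0 ≤ u) (k : ℕ) :
    0 ≤ u ^ k / Real.Gamma (α * k + 1) :=
  div_nonneg (pow_nonneg hu k) (Real.Gamma_pos_of_pos (by positivity)).le

lemma ML_one_le {α : ℝ} (hα : 0 < α) {u : ℝ} (hu : 0 ≤ u) : 1 ≤ mittagLeffler α u := by
  have h := Summable.le_tsum (ML_summable hα hu) 0 (fun k _ => ML_term_nonneg hα hu k)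
  simpa [mittagLeffler, Real.Gamma_one] using h

lemma ML_pos {α : ℝ} (hα : 0 < α) {u : ℝ} (hu : 0 ≤ u) : 0 < mittagLeffler α u :=
  lt_of_lt_of_le one_pos (ML_one_le hα hu)

-- integrability of (t-s)^(α-1) * s^c on Ioc 0 t
lemma integrable_kernel {α : ℝ} (hα : α ∈ Set.Ioo (0:ℝ) 1) {t : ℝ} (ht : 0 < t)
    {c : ℝ} (hc : 0 ≤ c) :
    IntegrableOn (fun s => (t - s) ^ (α - 1) * s ^ c) (Ioc (0:ℝ) t) := by
  have hrpow : IntervalIntegrable (fun s : ℝ => s ^ (α - 1)) volume 0 t :=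
    intervalIntegral.intervalIntegrable_rpow' (by linarith [hα.1])
  have hker : IntervalIntegrable (fun s : ℝ => (t - s) ^ (α - 1)) volume 0 t := by
    simpa using (hrpow.comp_sub_left t).symm
  have hker' : IntegrableOn (fun s : ℝ => (t - s) ^ (α - 1)) (Ioc (0:ℝ) t) := by
    rwa [intervalIntegrable_iff_integrableOn_Ioc_of_le ht.le] at hker
  refine Integrable.mono' (hker'.const_mul (t ^ c)) ?_ ?_
  · exact (by fun_prop : Measurable fun s : ℝ => (t - s) ^ (α - 1) * s ^ c).aestronglyMeasurable
  · filter_upwards [ae_restrict_mem measurableSet_Ioc] with s hs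
    have h1 : 0 ≤ t - s := by linarith [hs.2]
    have h2 : (0:ℝ) ≤ s := hs.1.le
    rw [Real.norm_of_nonneg (mul_nonneg (Real.rpow_nonneg h1 _) (Real.rpow_nonneg h2 _))]
    have : s ^ c ≤ t ^ c := Real.rpow_le_rpow h2 hs.2 hc
    calc (t - s) ^ (α-1) * s ^ c ≤ (t - s) ^ (α-1) * t ^ c :=
          mul_le_mul_of_nonneg_left this (Real.rpow_nonneg h1 _)
      _ = t ^ c * (t - s) ^ (α-1) := mul_comm _ _

-- key estimate
lemma key_lintegral {α γ : ℝ} (hα : α ∈ Set.Ioo (0:ℝ) 1) (hγ : 0 < γ) {t : ℝ} (ht : 0 ≤ t) :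
    ∫⁻ s in Ioc (0:ℝ) t,
        ENNReal.ofReal ((t - s) ^ (α - 1)) * ENNReal.ofReal (mittagLeffler α (γ * s ^ α))
      ≤ ENNReal.ofReal (Real.Gamma α / γ * mittagLeffler α (γ * t ^ α)) := by
  rcases eq_or_lt_of_le ht with rfl | ht
  · simp
  have hα0 := hα.1
  set h : ℕ → ℝ → ℝ := fun k s => (t - s) ^ (α - 1) * (γ ^ k * s ^ (α * k) / Real.Gamma (α * k + 1)) with hh
  -- step 1: rewrite integrand as tsum
  have step1 : ∫⁻ s in Ioc (0:ℝ) t,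
      ENNReal.ofReal ((t - s) ^ (α - 1)) * ENNReal.ofReal (mittagLeffler α (γ * s ^ α))
      = ∫⁻ s in Ioc (0:ℝ) t, ∑' k : ℕ, ENNReal.ofReal (h k s) := by
    refine setLIntegral_congr_fun measurableSet_Ioc (fun s hs => ?_)
    have hs0 : (0:ℝ) < s := hs.1
    have hsa : 0 ≤ γ * s ^ α := by positivity
    rw [mittagLeffler, ENNReal.ofReal_tsum_of_nonneg (ML_term_nonneg hα0 hsa) (ML_summable hα0 hsa),
      ← ENNReal.tsum_mul_left]
    congr 1; funext k
    rw [← ENNReal.ofReal_mul (Real.rpow_nonneg (by linarith [hs.2]) _)]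
    congr 1
    rw [hh]
    have : (γ * s ^ α) ^ k = γ ^ k * s ^ (α * k) := by
      rw [mul_pow, ← Real.rpow_natCast (s ^ α) k, ← Real.rpow_mul hs0.le]
    rw [this]
  rw [step1, lintegral_tsum (fun k => by fun_prop)]
  -- step 2: each term
  have step2 : ∀ k : ℕ, ∫⁻ s in Ioc (0:ℝ) t, ENNReal.ofReal (h k s)
      = ENNReal.ofReal ((Real.Gamma α / γ) * ((γ * t ^ α) ^ (k+1) / Real.Gamma (α * (k+1) + 1))) := by
    intro k
    have hint : IntegrableOn (h k) (Ioc (0:ℝ) t) := by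
      have := (integrable_kernel hα ht (c := α * k) (by positivity)).const_mul
        (γ ^ k / Real.Gamma (α * k + 1))
      exact IntegrableOn.congr_fun this (fun s _ => by simp only [hh]; ring) measurableSet_Ioc
    rw [← ofReal_integral_eq_lintegral_ofReal hint ?nn]
    case nn =>
      filter_upwards [ae_restrict_mem measurableSet_Ioc] with s hs
      have h1 : 0 ≤ t - s := by linarith [hs.2]
      have h2 : (0:ℝ) ≤ s := hs.1.le
      have := Real.Gamma_pos_of_pos (show (0:ℝ) < α * k + 1 by positivity)
      positivity
    congr 1
    have : ∫ s in Ioc (0:ℝ) t, h k s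
        = (γ ^ k / Real.Gamma (α * k + 1)) * ∫ s in Ioc (0:ℝ) t, (t - s) ^ (α - 1) * s ^ (α * k) := by
      rw [← integral_const_mul]
      refine setIntegral_congr_fun measurableSet_Ioc fun s _ => ?_
      rw [hh]; ring
    rw [this, ← intervalIntegral.integral_of_le ht.le, Ik hα0 ht (by positivity)]
    have hexp : (γ * t ^ α) ^ (k+1) = γ ^ (k+1) * t ^ (α * k + α) := by
      rw [mul_pow, ← Real.rpow_natCast (t ^ α) (k+1), ← Real.rpow_mul ht.le]
      push_cast; ring_nf
    rw [hexp]
    rw [show α * ((k:ℝ) + 1) + 1 = α * (k:ℝ) + 1 + α by ring]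
    have hg1 : Real.Gamma (α * k + 1) ≠ 0 := (Real.Gamma_pos_of_pos (by positivity)).ne'
    have hg2 : Real.Gamma (α * k + 1 + α) ≠ 0 := (Real.Gamma_pos_of_pos (by positivity)).ne'
    field_simp
    ring
  simp_rw [step2]
  -- step 3: sum up
  have hta : 0 ≤ γ * t ^ α := by positivity
  have hsum : Summable (fun k : ℕ => (γ * t ^ α) ^ k / Real.Gamma (α * k + 1)) :=
    ML_summable hα0 hta
  have hGγ : 0 ≤ Real.Gamma α / γ := div_nonneg (Real.Gamma_pos_of_pos hα0).le hγ.le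
  calc ∑' k : ℕ, ENNReal.ofReal ((Real.Gamma α / γ) * ((γ * t ^ α) ^ (k+1) / Real.Gamma (α * (k+1) + 1)))
      = ENNReal.ofReal (Real.Gamma α / γ) *
        ∑' k : ℕ, ENNReal.ofReal ((γ * t ^ α) ^ (k+1) / Real.Gamma (α * (↑(k+1):ℕ) + 1)) := by
        rw [← ENNReal.tsum_mul_left]
        congr 1; funext k
        rw [← ENNReal.ofReal_mul hGγ]
        norm_num
    _ ≤ ENNReal.ofReal (Real.Gamma α / γ) *
        ∑' k : ℕ, ENNReal.ofReal ((γ * t ^ α) ^ k / Real.Gamma (α * k + 1)) := by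
        refine mul_le_mul_right ?_ _
        exact ENNReal.tsum_comp_le_tsum_of_injective Nat.succ_injective
          (fun k => ENNReal.ofReal ((γ * t ^ α) ^ k / Real.Gamma (α * k + 1)))
    _ = ENNReal.ofReal (Real.Gamma α / γ) * ENNReal.ofReal (mittagLeffler α (γ * t ^ α)) := by
        rw [mittagLeffler, ENNReal.ofReal_tsum_of_nonneg (ML_term_nonneg hα0 hta) hsum]
    _ = ENNReal.ofReal (Real.Gamma α / γ * mittagLeffler α (γ * t ^ α)) := by
        rw [← ENNReal.ofReal_mul hGγ]

lemma integrable_kernel0 {α : ℝ} (hα : α ∈ Set.Ioo (0:ℝ) 1) {t : ℝ} (ht : 0 ≤ t) :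
    IntegrableOn (fun s : ℝ => (t - s) ^ (α - 1)) (Ioc (0:ℝ) t) := by
  have hrpow : IntervalIntegrable (fun s : ℝ => s ^ (α - 1)) volume 0 t :=
    intervalIntegral.intervalIntegrable_rpow' (by linarith [hα.1])
  have hker : IntervalIntegrable (fun s : ℝ => (t - s) ^ (α - 1)) volume 0 t := by
    simpa using (hrpow.comp_sub_left t).symm
  rwa [intervalIntegrable_iff_integrableOn_Ioc_of_le ht] at hker

lemma integrable_smul_kernel {d : ℕ} {α : ℝ} (hα : α ∈ Set.Ioo (0:ℝ) 1) {t T : ℝ}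
    (ht : 0 ≤ t) (htT : t ≤ T) {F : ℝ → EuclideanSpace ℝ (Fin d)}
    (hF : ContinuousOn F (Icc 0 T)) :
    IntegrableOn (fun s : ℝ => ((t - s) ^ (α - 1)) • F s) (Ioc (0:ℝ) t) := by
  obtain ⟨C, hC⟩ := IsCompact.exists_bound_of_continuousOn isCompact_Icc hF
  have hsub : Ioc (0:ℝ) t ⊆ Icc (0:ℝ) T := fun s hs => ⟨hs.1.le, hs.2.trans htT⟩
  refine Integrable.mono' ((integrable_kernel0 hα ht).const_mul (max C 0)) ?_ ?_
  · exact ((by fun_prop : Measurable fun s : ℝ => (t - s) ^ (α - 1)).aestronglyMeasurable).smul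
      ((hF.mono hsub).aestronglyMeasurable measurableSet_Ioc)
  · filter_upwards [ae_restrict_mem measurableSet_Ioc] with s hs
    have h1 : 0 ≤ t - s := by linarith [hs.2]
    rw [norm_smul, Real.norm_of_nonneg (Real.rpow_nonneg h1 _), mul_comm (max C 0)]
    exact mul_le_mul_of_nonneg_left ((hC s (hsub hs)).trans (le_max_left _ _))
      (Real.rpow_nonneg h1 _)

theorem stmt1 {d : ℕ} (α : ℝ) (hα : α ∈ Set.Ioo (0:ℝ) 1)
    (g : EuclideanSpace ℝ (Fin d) → EuclideanSpace ℝ (Fin d))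
    (L : ℝ) (hL : 0 < L)
    (hg : ∀ x y : EuclideanSpace ℝ (Fin d), ‖g x - g y‖ ≤ L * ‖x - y‖)
    (T : ℝ) (hT : 0 < T)
    (f : ℝ → EuclideanSpace ℝ (Fin d)) (hf : ContinuousOn f (Set.Icc 0 T))
    (γ : ℝ) (hγ : 0 < γ) :
    (∀ x y : ℝ → EuclideanSpace ℝ (Fin d),
      ContinuousOn x (Set.Icc 0 T) → ContinuousOn y (Set.Icc 0 T) →
      bieleckiNorm α γ T (volterraOp α g f x - volterraOp α g f y) ≤
        (L / γ) * bieleckiNorm α γ T (x - y)) ∧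
    (L < γ →
      ∃ q : ℝ, q < 1 ∧ 0 ≤ q ∧
        ∀ x y : ℝ → EuclideanSpace ℝ (Fin d),
          ContinuousOn x (Set.Icc 0 T) → ContinuousOn y (Set.Icc 0 T) →
          bieleckiNorm α γ T (volterraOp α g f x - volterraOp α g f y) ≤
            q * bieleckiNorm α γ T (x - y)) := by
  have hα0 := hα.1
  have hΓα : 0 < Real.Gamma α := Real.Gamma_pos_of_pos hα0
  have hgcont : Continuous g := by
    have : LipschitzWith (Real.toNNReal L) g := by
      refine LipschitzWith.of_dist_le_mul fun a b => ?_
      rw [dist_eq_norm, dist_eq_norm, Real.coe_toNNReal _ hL.le]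
      exact hg a b
    exact this.continuous
  haveI : Nonempty (Set.Icc (0:ℝ) T) := Nonempty.to_subtype (nonempty_Icc.2 hT.le)
  have Epos : ∀ s : ℝ, 0 ≤ s → 0 < mittagLeffler α (γ * s ^ α) := fun s hs =>
    ML_pos hα0 (mul_nonneg hγ.le (Real.rpow_nonneg hs _))
  have Eone : ∀ s : ℝ, 0 ≤ s → 1 ≤ mittagLeffler α (γ * s ^ α) := fun s hs =>
    ML_one_le hα0 (mul_nonneg hγ.le (Real.rpow_nonneg hs _))
  have main : ∀ x y : ℝ → EuclideanSpace ℝ (Fin d),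
      ContinuousOn x (Set.Icc 0 T) → ContinuousOn y (Set.Icc 0 T) →
      bieleckiNorm α γ T (volterraOp α g f x - volterraOp α g f y) ≤
        (L / γ) * bieleckiNorm α γ T (x - y) := by
    intro x y hx hy
    set N := bieleckiNorm α γ T (x - y) with hNdef
    -- boundedness of the weighted difference
    obtain ⟨M, hM⟩ := IsCompact.exists_bound_of_continuousOn isCompact_Icc (hx.sub hy)
    have hBdd : BddAbove (range fun t : Set.Icc (0:ℝ) T =>
        ‖(x - y) t.1‖ / mittagLeffler α (γ * t.1 ^ α)) := by
      refine ⟨max M 0, forall_mem_range.2 fun t => ?_⟩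
      calc ‖(x - y) t.1‖ / mittagLeffler α (γ * t.1 ^ α) ≤ ‖(x - y) t.1‖ :=
            div_le_self (norm_nonneg _) (Eone t.1 t.2.1)
        _ ≤ M := hM t.1 t.2
        _ ≤ max M 0 := le_max_left _ _
    have hN : ∀ s : ℝ, s ∈ Set.Icc (0:ℝ) T →
        ‖x s - y s‖ ≤ N * mittagLeffler α (γ * s ^ α) := by
      intro s hs
      have h := le_ciSup hBdd (⟨s, hs⟩ : Set.Icc (0:ℝ) T)
      rw [hNdef, bieleckiNorm]
      rw [div_le_iff₀ (Epos s hs.1)] at h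
      simpa using h
    have hN0 : 0 ≤ N := by
      have h := le_ciSup hBdd (⟨0, le_refl _, hT.le⟩ : Set.Icc (0:ℝ) T)
      refine le_trans ?_ h
      exact div_nonneg (norm_nonneg _) (Epos 0 le_rfl).le
    -- pointwise estimate
    have hpt : ∀ t : ℝ, t ∈ Set.Icc (0:ℝ) T →
        ‖(volterraOp α g f x - volterraOp α g f y) t‖ ≤
          (L / γ) * N * mittagLeffler α (γ * t ^ α) := by
      intro t htT
      have ht0 : 0 ≤ t := htT.1
      have hEt : 0 < mittagLeffler α (γ * t ^ α) := Epos t ht0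
      have hRHS0 : 0 ≤ (L / γ) * N * mittagLeffler α (γ * t ^ α) := by positivity
      have hix : IntegrableOn (fun s : ℝ => ((t - s) ^ (α - 1)) • g (x s)) (Ioc (0:ℝ) t) :=
        integrable_smul_kernel hα ht0 htT.2 (hgcont.comp_continuousOn hx)
      have hiy : IntegrableOn (fun s : ℝ => ((t - s) ^ (α - 1)) • g (y s)) (Ioc (0:ℝ) t) :=
        integrable_smul_kernel hα ht0 htT.2 (hgcont.comp_continuousOn hy)
      have hix' : IntervalIntegrable (fun s : ℝ => ((t - s) ^ (α - 1)) • g (x s)) volume 0 t := by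
        rwa [intervalIntegrable_iff_integrableOn_Ioc_of_le ht0]
      have hiy' : IntervalIntegrable (fun s : ℝ => ((t - s) ^ (α - 1)) • g (y s)) volume 0 t := by
        rwa [intervalIntegrable_iff_integrableOn_Ioc_of_le ht0]
      have hdiff : (volterraOp α g f x - volterraOp α g f y) t =
          (1 / Real.Gamma α) •
            ∫ s in (0:ℝ)..t, ((t - s) ^ (α - 1)) • (g (x s) - g (y s)) := by
        have : (fun s : ℝ => ((t - s) ^ (α - 1)) • (g (x s) - g (y s))) =
            fun s : ℝ => ((t - s) ^ (α - 1)) • g (x s) - ((t - s) ^ (α - 1)) • g (y s) := by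
          funext s; rw [smul_sub]
        rw [this, intervalIntegral.integral_sub hix' hiy']
        simp only [Pi.sub_apply, volterraOp, smul_sub]
        abel
      rw [hdiff, norm_smul, Real.norm_of_nonneg (by positivity : (0:ℝ) ≤ 1 / Real.Gamma α)]
      -- bound the integral
      have hKint : IntegrableOn
          (fun s : ℝ => ((t - s) ^ (α - 1)) • (g (x s) - g (y s))) (Ioc (0:ℝ) t) :=
        integrable_smul_kernel hα ht0 htT.2
          ((hgcont.comp_continuousOn hx).sub (hgcont.comp_continuousOn hy))
      have hnormint : ∫ s in (0:ℝ)..t, ‖((t - s) ^ (α - 1)) • (g (x s) - g (y s))‖ =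
          ∫ s in Ioc (0:ℝ) t, ‖((t - s) ^ (α - 1)) • (g (x s) - g (y s))‖ :=
        intervalIntegral.integral_of_le ht0
      have hbound : ∫ s in Ioc (0:ℝ) t, ‖((t - s) ^ (α - 1)) • (g (x s) - g (y s))‖ ≤
          L * N * (Real.Gamma α / γ * mittagLeffler α (γ * t ^ α)) := by
        rw [← ENNReal.ofReal_le_ofReal_iff (by positivity)]
        rw [ofReal_integral_eq_lintegral_ofReal hKint.norm (ae_of_all _ fun s => norm_nonneg _)]
        calc ∫⁻ s in Ioc (0:ℝ) t, ENNReal.ofReal ‖((t - s) ^ (α - 1)) • (g (x s) - g (y s))‖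
            ≤ ∫⁻ s in Ioc (0:ℝ) t, ENNReal.ofReal (L * N) *
                (ENNReal.ofReal ((t - s) ^ (α - 1)) *
                  ENNReal.ofReal (mittagLeffler α (γ * s ^ α))) := by
              refine lintegral_mono_ae ?_
              filter_upwards [ae_restrict_mem measurableSet_Ioc] with s hs
              have h1 : 0 ≤ t - s := by linarith [hs.2]
              have hsIcc : s ∈ Set.Icc (0:ℝ) T := ⟨hs.1.le, hs.2.trans htT.2⟩
              rw [← ENNReal.ofReal_mul (by positivity), ← ENNReal.ofReal_mul (by positivity)]
              refine ENNReal.ofReal_le_ofReal ?_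
              rw [norm_smul, Real.norm_of_nonneg (Real.rpow_nonneg h1 _)]
              calc (t - s) ^ (α - 1) * ‖g (x s) - g (y s)‖
                  ≤ (t - s) ^ (α - 1) * (L * (N * mittagLeffler α (γ * s ^ α))) := by
                    refine mul_le_mul_of_nonneg_left ?_ (Real.rpow_nonneg h1 _)
                    exact (hg (x s) (y s)).trans
                      (mul_le_mul_of_nonneg_left (hN s hsIcc) hL.le)
                _ = L * N * ((t - s) ^ (α - 1) * mittagLeffler α (γ * s ^ α)) := by ring
          _ = ENNReal.ofReal (L * N) * ∫⁻ s in Ioc (0:ℝ) t,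
                ENNReal.ofReal ((t - s) ^ (α - 1)) *
                  ENNReal.ofReal (mittagLeffler α (γ * s ^ α)) :=
              lintegral_const_mul' _ _ ENNReal.ofReal_ne_top
          _ ≤ ENNReal.ofReal (L * N) *
                ENNReal.ofReal (Real.Gamma α / γ * mittagLeffler α (γ * t ^ α)) :=
              mul_le_mul_right (key_lintegral hα hγ ht0) _
          _ = ENNReal.ofReal (L * N * (Real.Gamma α / γ * mittagLeffler α (γ * t ^ α))) := by
              rw [← ENNReal.ofReal_mul (by positivity)]
      calc (1 / Real.Gamma α) * ‖∫ s in (0:ℝ)..t, ((t - s) ^ (α - 1)) • (g (x s) - g (y s))‖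
          ≤ (1 / Real.Gamma α) *
              ∫ s in (0:ℝ)..t, ‖((t - s) ^ (α - 1)) • (g (x s) - g (y s))‖ := by
            refine mul_le_mul_of_nonneg_left ?_ (by positivity)
            exact intervalIntegral.norm_integral_le_integral_norm ht0
        _ ≤ (1 / Real.Gamma α) * (L * N * (Real.Gamma α / γ * mittagLeffler α (γ * t ^ α))) := by
            rw [hnormint]
            exact mul_le_mul_of_nonneg_left hbound (by positivity)
        _ = (L / γ) * N * mittagLeffler α (γ * t ^ α) := by
            field_simp
    -- conclude via csSup
    rw [bieleckiNorm]
    refine ciSup_le fun t => ?_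
    rw [div_le_iff₀ (Epos t.1 t.2.1)]
    exact hpt t.1 t.2
  refine ⟨main, fun hLγ => ⟨L / γ, (div_lt_one hγ).2 hLγ, by positivity, main⟩⟩
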